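/- Let a, b ∈ ℂ with |a|² + |b|² = 1 and let U be the qubit unitary U = [[a, b], [−conj(b), conj(a)]]. Then the value 2|a||b| is the greatest element of the set { C_{l1}(ρ) − C_{l1}(U ρ U†) : ρ a qubit density matrix }. Consequently, for qubit unitaries the generalized de-cohering power, the generalized cohering power, and the cohering power in the l1-coherence all coincide and equal 2|a||b|, and each is at least the de-cohering power 1 − ||a|² − |b|²|. -/

import Mathlib

open Matrix BigOperators ComplexOrder

/-- The l1-coherence of a matrix: the sum of the absolute values of its
off-diagonal entries. -/
noncomputable def Cl1 {n : ℕ} (A : Matrix (Fin n) (Fin n) ℂ) : ℝ :=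
  ∑ i, ∑ j, if i ≠ j then ‖A i j‖ else 0

/-- A density matrix: positive semidefinite with trace 1. -/
def IsDensity {n : ℕ} (ρ : Matrix (Fin n) (Fin n) ℂ) : Prop :=
  ρ.PosSemidef ∧ ρ.trace = 1

/-- A quantum operation (CPTP map) given by a finite family of Kraus operators. -/
def IsQuantumOp {n : ℕ} (Φ : Matrix (Fin n) (Fin n) ℂ → Matrix (Fin n) (Fin n) ℂ) : Prop :=
  ∃ (m : ℕ) (K : Fin m → Matrix (Fin n) (Fin n) ℂ),
    (∑ i, (K i)ᴴ * K i) = 1 ∧ ∀ ρ, Φ ρ = ∑ i, K i * ρ * (K i)ᴴ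

/-- The dephasing map `Δ`, keeping only the diagonal part of a matrix. -/
def Deph {n : ℕ} (A : Matrix (Fin n) (Fin n) ℂ) : Matrix (Fin n) (Fin n) ℂ :=
  Matrix.of fun i j => if i = j then A i j else 0

/-- The maximally coherent qubit state vector `(1/√2)(1, e^{iθ})`. -/
noncomputable def psi (θ : ℝ) : Fin 2 → ℂ :=
  ![1 / (Real.sqrt 2 : ℂ), Complex.exp (θ * Complex.I) / (Real.sqrt 2 : ℂ)]

/-- The outer product `w w†` of a vector with itself. -/
def outer {n : ℕ} (w : Fin n → ℂ) : Matrix (Fin n) (Fin n) ℂ :=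
  Matrix.vecMulVec w (star w)

/-- The qubit unitary `[[a, b], [-conj b, conj a]]`. -/
def Uab (a b : ℂ) : Matrix (Fin 2) (Fin 2) ℂ :=
  !![a, b; -(starRingEnd ℂ) b, (starRingEnd ℂ) a]

/-- The binary entropy (base 2), with the convention `0 · log 0 = 0`. -/
noncomputable def H (x : ℝ) : ℝ :=
  -(x * Real.logb 2 x) - (1 - x) * Real.logb 2 (1 - x)


set_option maxHeartbeats 1600000

private lemma hquad (m D r t R : ℝ) (hm : 0 ≤ m) (hD : D^2 + 4*m^2 = 1)
    (hR : 4*R^2 + t^2 = 1) (hR0 : 0 ≤ R) (h1 : m ≤ r) (h2 : r ≤ R) :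
    0 ≤ -4*m*r^2 + 2*D*r*t + m*t^2 + 2*r - m := by
  have hfm : 0 ≤ m*(D+t)^2 := mul_nonneg hm (sq_nonneg _)
  have hu : 4*m*R - D*t ≤ 1 := by
    nlinarith [sq_nonneg (2*m*t + 2*R*D), sq_nonneg (4*m*R - D*t - 1)]
  have hfR : 0 ≤ 2*R*(1 - 4*m*R + D*t) := by nlinarith [hR0]
  have key : (R-m) * (-4*m*r^2 + 2*D*r*t + m*t^2 + 2*r - m)
      = (R-r)*(m*(D+t)^2) + (r-m)*(2*R*(1 - 4*m*R + D*t))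
        + 4*m*(r-m)*(R-r)*(R-m) := by
    linear_combination (m*(r-R))*hD + (m*(r-m))*hR
  rcases eq_or_lt_of_le (h1.trans h2) with h | h
  · have hrm : r = m := le_antisymm (h ▸ h2) h1
    subst hrm
    nlinarith [hfm]
  · nlinarith [key, mul_nonneg (sub_nonneg.2 h2) hfm, mul_nonneg (sub_nonneg.2 h1) hfR,
      mul_nonneg (mul_nonneg (mul_nonneg hm (sub_nonneg.2 h1)) (sub_nonneg.2 h2)) (sub_nonneg.2 h.le),
      sub_pos.2 h]

private lemma key_real (m D r t x y : ℝ) (hm0 : 0 ≤ m) (hD : D^2 + 4*m^2 = 1)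
    (hxy : x^2 + y^2 = 1) (hc : 4*r^2 + t^2 ≤ 1) (hm : m ≤ r) :
    (r - m)^2 ≤ (D*r*x + m*t)^2 + r^2*y^2 := by
  have hr0 : 0 ≤ r := hm0.trans hm
  have ept : ∀ t0 : ℝ, 4*r^2 + t0^2 ≤ 1 →
      0 ≤ -4*m*r^2 + 2*D*r*t0 + m*t0^2 + 2*r - m := by
    intro t0 hc0
    have ht0 : 0 ≤ (1 - t0^2)/4 := by nlinarith [sq_nonneg r]
    have hR0 : 0 ≤ Real.sqrt ((1 - t0^2)/4) := Real.sqrt_nonneg _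
    have hR2 : Real.sqrt ((1 - t0^2)/4)^2 = (1 - t0^2)/4 := Real.sq_sqrt ht0
    have hR : 4*Real.sqrt ((1 - t0^2)/4)^2 + t0^2 = 1 := by rw [hR2]; ring
    have h2 : r ≤ Real.sqrt ((1 - t0^2)/4) := by
      nlinarith [sq_nonneg (Real.sqrt ((1 - t0^2)/4) - r)]
    exact hquad m D r t0 _ hm0 hD hR hR0 hm h2
  have e1 := ept t hc
  have e2 := ept (-t) (by nlinarith)
  have hx1 : (0:ℝ) ≤ 1 + x := by nlinarith [sq_nonneg y]
  have hx2 : (0:ℝ) ≤ 1 - x := by nlinarith [sq_nonneg y]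
  have hD' : D^2 = 1 - 4*m^2 := by linarith
  have hy' : y^2 = 1 - x^2 := by linarith
  have iden : (D*r*x + m*t)^2 + r^2*y^2 - (r-m)^2
      = (m*(1+x)*(-4*m*r^2 + 2*D*r*t + m*t^2 + 2*r - m)
        + m*(1-x)*(-4*m*r^2 + 2*D*r*(-t) + m*(-t)^2 + 2*r - m))/2
        + 4*m^2*r^2*(1-x^2) := by
    linear_combination (r*x)^2 * hD' + r^2 * hy'
  have h3 : (0:ℝ) ≤ 4*m^2*r^2*((1+x)*(1-x)) := by positivity
  have final : 0 ≤ (D*r*x + m*t)^2 + r^2*y^2 - (r-m)^2 := by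
    rw [iden]
    have f1 := mul_nonneg (mul_nonneg hm0 hx1) e1
    have f2 := mul_nonneg (mul_nonneg hm0 hx2) e2
    nlinarith [h3]
  linarith [final]

private lemma det_psd (ρ : Matrix (Fin 2) (Fin 2) ℂ) (hpsd : ρ.PosSemidef) (p q : ℝ) (c : ℂ)
    (h00 : ρ 0 0 = (p:ℂ)) (h11 : ρ 1 1 = (q:ℂ)) (h01 : ρ 0 1 = c)
    (h10 : ρ 1 0 = (starRingEnd ℂ) c) (htr : p + q = 1) :
    Complex.normSq c ≤ p * q := by
  have hv1 := hpsd.dotProduct_mulVec_nonneg ![ρ 1 1, -(ρ 1 0)]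
  have hv2 := hpsd.dotProduct_mulVec_nonneg ![-(ρ 0 1), ρ 0 0]
  simp only [dotProduct, Matrix.mulVec, Fin.sum_univ_two, Matrix.cons_val_zero,
    Matrix.cons_val_one, Matrix.head_cons, Pi.star_apply, RCLike.star_def] at hv1 hv2
  rw [h00, h11, h01, h10] at hv1 hv2
  have hc : c * (starRingEnd ℂ) c = (Complex.normSq c : ℂ) := Complex.mul_conj _
  have comb := add_le_add hv1 hv2
  have eq2 : (starRingEnd ℂ) (q:ℂ) * ((p:ℂ) * ↑q + c * -(starRingEnd ℂ) c) +
        (starRingEnd ℂ) (-(starRingEnd ℂ) c) * ((starRingEnd ℂ) c * ↑q + ↑q * -(starRingEnd ℂ) c) +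
      ((starRingEnd ℂ) (-c) * (↑p * -c + c * ↑p) + (starRingEnd ℂ) ↑p * ((starRingEnd ℂ) c * -c + ↑q * ↑p))
      = (((p + q) * (p * q - Complex.normSq c) : ℝ) : ℂ) := by
    simp only [map_neg, Complex.conj_conj, Complex.conj_ofReal]
    push_cast
    linear_combination (-(q:ℂ) - p) * hc
  rw [eq2, add_zero, htr, one_mul] at comb
  have := Complex.real_le_real.mp (by exact_mod_cast comb)
  linarith

private lemma Cl1_two (A : Matrix (Fin 2) (Fin 2) ℂ) :
    Cl1 A = ‖A 0 1‖ + ‖A 1 0‖ := by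
  simp [Cl1, Fin.sum_univ_two]

private lemma Uab_mul_conjTranspose (a b : ℂ)
    (hab : ‖a‖ ^ 2 + ‖b‖ ^ 2 = 1) :
    Uab a b * (Uab a b)ᴴ = 1 := by
  have h : (a * (starRingEnd ℂ) a + b * (starRingEnd ℂ) b) = 1 := by
    rw [Complex.mul_conj, Complex.mul_conj, ← Complex.ofReal_add,
      ← Complex.sq_norm, ← Complex.sq_norm, hab, Complex.ofReal_one]
  ext i j
  fin_cases i <;> fin_cases j <;>
    simp [Uab, Matrix.mul_apply, Fin.sum_univ_two, Matrix.one_apply] <;>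
    ring_nf <;> linear_combination h

private lemma conjTranspose_mul_Uab (a b : ℂ)
    (hab : ‖a‖ ^ 2 + ‖b‖ ^ 2 = 1) :
    (Uab a b)ᴴ * Uab a b = 1 := by
  have h : (a * (starRingEnd ℂ) a + b * (starRingEnd ℂ) b) = 1 := by
    rw [Complex.mul_conj, Complex.mul_conj, ← Complex.ofReal_add,
      ← Complex.sq_norm, ← Complex.sq_norm, hab, Complex.ofReal_one]
  ext i j
  fin_cases i <;> fin_cases j <;>
    simp [Uab, Matrix.mul_apply, Fin.sum_univ_two, Matrix.one_apply] <;>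
    ring_nf <;> linear_combination h

private lemma Uab_conjTranspose (a b : ℂ) :
    (Uab a b)ᴴ = Uab ((starRingEnd ℂ) a) (-b) := by
  ext i j
  fin_cases i <;> fin_cases j <;> simp [Uab]

private lemma qubit_upper (a b : ℂ) (hab : ‖a‖ ^ 2 + ‖b‖ ^ 2 = 1)
    (ρ : Matrix (Fin 2) (Fin 2) ℂ) (hρ : IsDensity ρ) :
    Cl1 ρ - Cl1 (Uab a b * ρ * (Uab a b)ᴴ) ≤ 2 * ‖a‖ * ‖b‖ := by
  obtain ⟨hpsd, htr⟩ := hρ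
  have hH : ρᴴ = ρ := hpsd.1
  set p := (ρ 0 0).re with hp
  set q := (ρ 1 1).re with hq
  set c := ρ 0 1 with hcdef
  have h00 : ρ 0 0 = (p:ℂ) := by
    have h := congrFun (congrFun hH 0) 0
    simp only [Matrix.conjTranspose_apply, RCLike.star_def] at h
    exact (Complex.conj_eq_iff_re.mp h).symm
  have h11 : ρ 1 1 = (q:ℂ) := by
    have h := congrFun (congrFun hH 1) 1
    simp only [Matrix.conjTranspose_apply, RCLike.star_def] at h
    exact (Complex.conj_eq_iff_re.mp h).symm
  have h10 : ρ 1 0 = (starRingEnd ℂ) c := by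
    have h := congrFun (congrFun hH 1) 0
    simp only [Matrix.conjTranspose_apply, RCLike.star_def] at h
    exact h.symm
  have htr' : p + q = 1 := by
    have h : ρ.trace = ρ 0 0 + ρ 1 1 := by
      simp [Matrix.trace, Fin.sum_univ_two, Matrix.diag]
    rw [h, h00, h11] at htr
    exact_mod_cast htr
  have hdet := det_psd ρ hpsd p q c h00 h11 rfl h10 htr'
  set A := ‖a‖ with hA
  set B := ‖b‖ with hB
  set r := ‖c‖ with hr
  have hA0 : 0 ≤ A := norm_nonneg a
  have hB0 : 0 ≤ B := norm_nonneg b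
  have hr0 : 0 ≤ r := norm_nonneg c
  have hr2 : r^2 = Complex.normSq c := Complex.sq_norm c
  have hc4 : 4*r^2 + (q-p)^2 ≤ 1 := by
    rw [hr2]
    nlinarith [hdet, htr']
  set σ := Uab a b * ρ * (Uab a b)ᴴ with hσdef
  set X := σ 0 1 with hXdef
  have hX : X = a^2*c - b^2*(starRingEnd ℂ) c + a*b*((q:ℂ)-(p:ℂ)) := by
    rw [hXdef, hσdef]
    simp only [Uab, Matrix.mul_apply, Fin.sum_univ_two, Matrix.conjTranspose_apply,
      Matrix.cons_val', Matrix.cons_val_zero, Matrix.cons_val_one, Matrix.head_cons,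
      Matrix.empty_val', Matrix.cons_val_fin_one, Matrix.head_fin_const, Matrix.of_apply]
    rw [h00, h11, h10]
    simp only [star_neg, RCLike.star_def, Complex.conj_conj]
    ring
  have hσH : σᴴ = σ := by
    rw [hσdef, Matrix.conjTranspose_mul, Matrix.conjTranspose_mul,
      Matrix.conjTranspose_conjTranspose, hH, Matrix.mul_assoc]
  have hσ10 : σ 1 0 = (starRingEnd ℂ) X := by
    have h := congrFun (congrFun hσH 1) 0
    simp only [Matrix.conjTranspose_apply, RCLike.star_def] at h
    exact h.symm
  rw [Cl1_two ρ, Cl1_two σ, ← hcdef, h10, hσ10, ← hXdef, Complex.norm_conj, Complex.norm_conj]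
  have main : r ≤ A*B + ‖X‖ := by
    rcases le_or_gt r (A*B) with h | h
    · exact le_add_of_le_of_nonneg h (norm_nonneg X)
    rcases eq_or_ne a 0 with ha0 | ha0
    · have hA1 : A = 0 := by rw [hA, ha0]; simp
      have hB1 : B^2 = 1 := by rw [hA1] at hab; linarith
      have hXr : ‖X‖ = r := by
        rw [hX, ha0]
        simp only [ne_eq, OfNat.ofNat_ne_zero, not_false_eq_true, zero_pow, zero_mul,
          mul_zero, zero_sub, zero_add, add_zero, norm_neg]
        rw [norm_mul, norm_pow, Complex.norm_conj, ← hB, ← hr, hB1, one_mul]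
      rw [hXr]
      nlinarith [mul_nonneg hA0 hB0]
    rcases eq_or_ne b 0 with hb0 | hb0
    · have hB1 : B = 0 := by rw [hB, hb0]; simp
      have hA1 : A^2 = 1 := by rw [hB1] at hab; linarith
      have hXr : ‖X‖ = r := by
        rw [hX, hb0]
        simp only [ne_eq, OfNat.ofNat_ne_zero, not_false_eq_true, zero_pow, zero_mul,
          mul_zero, sub_zero, add_zero]
        rw [norm_mul, norm_pow, ← hA, ← hr, hA1, one_mul]
      rw [hXr]
      nlinarith [mul_nonneg hA0 hB0]
    -- main case
    have hA1 : 0 < A := by rw [hA]; exact norm_pos_iff.mpr ha0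
    have hB1 : 0 < B := by rw [hB]; exact norm_pos_iff.mpr hb0
    have hABr : 0 < A*B*r := by
      have : 0 < A*B := mul_pos hA1 hB1
      nlinarith
    set u := a * (starRingEnd ℂ) b * c with hu
    set x := u.re / (A*B*r) with hx
    set y := u.im / (A*B*r) with hy
    have hnu : Complex.normSq u = (A*B*r)^2 := by
      rw [hu, Complex.normSq_mul, Complex.normSq_mul, Complex.normSq_conj,
        ← Complex.sq_norm, ← Complex.sq_norm, ← Complex.sq_norm, ← hA, ← hB, ← hr]
      ring
    have hure : u.re = (A*B*r)*x := by rw [hx]; field_simp [(lt_of_le_of_lt (mul_nonneg hA0 hB0) h).ne']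
    have huim : u.im = (A*B*r)*y := by rw [hy]; field_simp [(lt_of_le_of_lt (mul_nonneg hA0 hB0) h).ne']
    have hxy : x^2 + y^2 = 1 := by
      have h1 : u.re*u.re + u.im*u.im = (A*B*r)^2 := by
        rw [← Complex.normSq_apply, hnu]
      rw [hx, hy]
      field_simp [(lt_of_le_of_lt (mul_nonneg hA0 hB0) h).ne']
      nlinarith [h1]
    have ha' : a * (starRingEnd ℂ) a = (A:ℂ)^2 := by
      rw [Complex.mul_conj, ← Complex.sq_norm, ← hA]; push_cast; ring
    have hb' : b * (starRingEnd ℂ) b = (B:ℂ)^2 := by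
      rw [Complex.mul_conj, ← Complex.sq_norm, ← hB]; push_cast; ring
    set Z : ℂ := ((A^2*r : ℝ):ℂ) * u - ((B^2*r:ℝ):ℂ) * (starRingEnd ℂ) u
        + ((A^2*B^2*r*(q-p) : ℝ):ℂ) with hZ
    have iden : ((A^2*B^2*r : ℝ) : ℂ) * X = a * b * Z := by
      rw [hX, hZ, hu]
      simp only [_root_.map_mul, Complex.conj_conj]
      push_cast
      linear_combination (-((A:ℂ)^2*r)*a^2*c)*hb' + ((B:ℂ)^2*r*b^2*(starRingEnd ℂ) c)*ha'
    have hZre : Z.re = (A*B*r)*((A^2-B^2)*r*x + A*B*(q-p)) := by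
      rw [hZ]
      simp only [Complex.add_re, Complex.sub_re, Complex.mul_re, Complex.ofReal_re,
        Complex.ofReal_im, Complex.conj_re, Complex.conj_im, hure]
      ring
    have hZim : Z.im = (A*B*r)*(r*y) := by
      rw [hZ]
      simp only [Complex.add_im, Complex.sub_im, Complex.mul_im, Complex.ofReal_re,
        Complex.ofReal_im, Complex.conj_re, Complex.conj_im, hure, huim]
      linear_combination (A*B*r^2*y)*hab
    have hnZ : Complex.normSq Z = (A*B*r)^2 * (((A^2-B^2)*r*x + A*B*(q-p))^2 + (r*y)^2) := by
      rw [Complex.normSq_apply, hZre, hZim]; ring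
    have hnX : Complex.normSq X = ((A^2-B^2)*r*x + A*B*(q-p))^2 + r^2*y^2 := by
      have e1 := congrArg Complex.normSq iden
      rw [Complex.normSq_mul, Complex.normSq_ofReal, Complex.normSq_mul, Complex.normSq_mul, hnZ,
        ← Complex.sq_norm a, ← Complex.sq_norm b, ← hA, ← hB] at e1
      have hrpos : 0 < r := lt_of_le_of_lt (mul_nonneg hA0 hB0) h
      have hpos1 : (0:ℝ) < A^2*B^2*r := mul_pos (mul_pos (pow_pos hA1 2) (pow_pos hB1 2)) hrpos
      have hpos : (0:ℝ) < (A^2*B^2*r)*(A^2*B^2*r) := mul_pos hpos1 hpos1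
      have e2 : ((A^2*B^2*r)*(A^2*B^2*r)) * Complex.normSq X
          = ((A^2*B^2*r)*(A^2*B^2*r)) * (((A^2-B^2)*r*x + A*B*(q-p))^2 + r^2*y^2) := by
        rw [e1]; ring
      exact mul_left_cancel₀ (ne_of_gt hpos) e2
    have hkey := key_real (A*B) (A^2-B^2) r (q-p) x y (mul_nonneg hA0 hB0)
      (by nlinarith [hab]) hxy hc4 h.le
    rw [← hnX, ← Complex.sq_norm X] at hkey
    nlinarith [hkey, norm_nonneg X]
  linarith

theorem generalized_decohering_power_l1_qubit_unitary
    (a b : ℂ) (hab : ‖a‖ ^ 2 + ‖b‖ ^ 2 = 1) :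
    IsGreatest
      {x : ℝ | ∃ ρ : Matrix (Fin 2) (Fin 2) ℂ, IsDensity ρ ∧
        x = Cl1 ρ - Cl1 (Uab a b * ρ * (Uab a b)ᴴ)}
      (2 * ‖a‖ * ‖b‖) ∧
    IsGreatest
      {x : ℝ | ∃ ρ : Matrix (Fin 2) (Fin 2) ℂ, IsDensity ρ ∧
        x = Cl1 (Uab a b * ρ * (Uab a b)ᴴ) - Cl1 ρ}
      (2 * ‖a‖ * ‖b‖) ∧
    max (Cl1 (Uab a b * Matrix.single (0 : Fin 2) 0 (1 : ℂ) * (Uab a b)ᴴ))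
        (Cl1 (Uab a b * Matrix.single (1 : Fin 2) 1 (1 : ℂ) * (Uab a b)ᴴ)) =
      2 * ‖a‖ * ‖b‖ ∧
    1 - |‖a‖ ^ 2 - ‖b‖ ^ 2| ≤
      2 * ‖a‖ * ‖b‖ := by
  have hUU := Uab_mul_conjTranspose a b hab
  have hU'U := conjTranspose_mul_Uab a b hab
  have hA0 : 0 ≤ ‖a‖ := norm_nonneg a
  have hB0 : 0 ≤ ‖b‖ := norm_nonneg b
  have hE0psd : (Matrix.single (0:Fin 2) (0:Fin 2) (1:ℂ)).PosSemidef := by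
    have h : (Matrix.single (0:Fin 2) (0:Fin 2) (1:ℂ))ᴴ * Matrix.single (0:Fin 2) (0:Fin 2) (1:ℂ)
        = Matrix.single (0:Fin 2) (0:Fin 2) (1:ℂ) := by
      ext i j
      fin_cases i <;> fin_cases j <;>
        simp [Matrix.mul_apply, Fin.sum_univ_two, Matrix.single,
          Matrix.conjTranspose_apply, Matrix.vecHead, Matrix.vecTail]
    exact h ▸ Matrix.posSemidef_conjTranspose_mul_self _
  have hE0tr : (Matrix.single (0:Fin 2) (0:Fin 2) (1:ℂ)).trace = 1 := by
    simp [Matrix.trace, Fin.sum_univ_two, Matrix.diag, Matrix.single]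
  have hE0d : IsDensity (Matrix.single (0:Fin 2) (0:Fin 2) (1:ℂ)) := ⟨hE0psd, hE0tr⟩
  have hclE0 : Cl1 (Matrix.single (0:Fin 2) (0:Fin 2) (1:ℂ)) = 0 := by
    rw [Cl1_two]
    simp [Matrix.single]
  have h1 : (Uab a b * Matrix.single (0:Fin 2) (0:Fin 2) (1:ℂ) * (Uab a b)ᴴ) 0 1 = -(a*b) := by
    simp [Uab, Matrix.mul_apply, Fin.sum_univ_two, Matrix.single,
      Matrix.conjTranspose_apply, Matrix.vecHead, Matrix.vecTail]
  have h2 : (Uab a b * Matrix.single (0:Fin 2) (0:Fin 2) (1:ℂ) * (Uab a b)ᴴ) 1 0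
      = -((starRingEnd ℂ) b * (starRingEnd ℂ) a) := by
    simp [Uab, Matrix.mul_apply, Fin.sum_univ_two, Matrix.single,
      Matrix.conjTranspose_apply, Matrix.vecHead, Matrix.vecTail]
  have hcl : Cl1 (Uab a b * Matrix.single (0:Fin 2) (0:Fin 2) (1:ℂ) * (Uab a b)ᴴ)
      = 2 * ‖a‖ * ‖b‖ := by
    rw [Cl1_two, h1, h2]
    simp only [norm_neg, norm_mul, Complex.norm_conj]
    ring
  have h3 : (Uab a b * Matrix.single (1:Fin 2) (1:Fin 2) (1:ℂ) * (Uab a b)ᴴ) 0 1 = b * a := by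
    simp [Uab, Matrix.mul_apply, Fin.sum_univ_two, Matrix.single,
      Matrix.conjTranspose_apply, Matrix.vecHead, Matrix.vecTail]
  have h4 : (Uab a b * Matrix.single (1:Fin 2) (1:Fin 2) (1:ℂ) * (Uab a b)ᴴ) 1 0
      = (starRingEnd ℂ) a * (starRingEnd ℂ) b := by
    simp [Uab, Matrix.mul_apply, Fin.sum_univ_two, Matrix.single,
      Matrix.conjTranspose_apply, Matrix.vecHead, Matrix.vecTail]
  have hcl1 : Cl1 (Uab a b * Matrix.single (1:Fin 2) (1:Fin 2) (1:ℂ) * (Uab a b)ᴴ)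
      = 2 * ‖a‖ * ‖b‖ := by
    rw [Cl1_two, h3, h4]
    simp only [norm_mul, Complex.norm_conj]
    ring
  have hr1 : ((Uab a b)ᴴ * Matrix.single (0:Fin 2) (0:Fin 2) (1:ℂ) * Uab a b) 0 1
      = (starRingEnd ℂ) a * b := by
    simp [Uab, Matrix.mul_apply, Fin.sum_univ_two, Matrix.single,
      Matrix.conjTranspose_apply, Matrix.vecHead, Matrix.vecTail]
  have hr2 : ((Uab a b)ᴴ * Matrix.single (0:Fin 2) (0:Fin 2) (1:ℂ) * Uab a b) 1 0
      = (starRingEnd ℂ) b * a := by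
    simp [Uab, Matrix.mul_apply, Fin.sum_univ_two, Matrix.single,
      Matrix.conjTranspose_apply, Matrix.vecHead, Matrix.vecTail]
  have hclr : Cl1 ((Uab a b)ᴴ * Matrix.single (0:Fin 2) (0:Fin 2) (1:ℂ) * Uab a b)
      = 2 * ‖a‖ * ‖b‖ := by
    rw [Cl1_two, hr1, hr2]
    simp only [norm_mul, Complex.norm_conj]
    ring
  refine ⟨⟨?_, ?_⟩, ⟨?_, ?_⟩, ?_, ?_⟩
  · -- membership for de-cohering
    refine ⟨(Uab a b)ᴴ * Matrix.single (0:Fin 2) (0:Fin 2) (1:ℂ) * Uab a b,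
      ⟨hE0psd.conjTranspose_mul_mul_same _, ?_⟩, ?_⟩
    · rw [Matrix.trace_mul_cycle, hUU, Matrix.one_mul, hE0tr]
    · have hback : Uab a b * ((Uab a b)ᴴ * Matrix.single (0:Fin 2) (0:Fin 2) (1:ℂ) * Uab a b) * (Uab a b)ᴴ
          = Matrix.single (0:Fin 2) (0:Fin 2) (1:ℂ) := by
        calc Uab a b * ((Uab a b)ᴴ * Matrix.single (0:Fin 2) (0:Fin 2) (1:ℂ) * Uab a b) * (Uab a b)ᴴ
            = (Uab a b * (Uab a b)ᴴ) * Matrix.single (0:Fin 2) (0:Fin 2) (1:ℂ) * (Uab a b * (Uab a b)ᴴ) := by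
              simp only [Matrix.mul_assoc]
          _ = Matrix.single (0:Fin 2) (0:Fin 2) (1:ℂ) := by rw [hUU, Matrix.one_mul, Matrix.mul_one]
      rw [hback, hclr, hclE0, sub_zero]
  · rintro x ⟨ρ, hρ, rfl⟩
    exact qubit_upper a b hab ρ hρ
  · -- membership for cohering
    exact ⟨Matrix.single (0:Fin 2) (0:Fin 2) (1:ℂ), hE0d, by rw [hcl, hclE0, sub_zero]⟩
  · rintro x ⟨ρ, hρ, rfl⟩
    have hab' : ‖(starRingEnd ℂ) a‖ ^ 2 + ‖-b‖ ^ 2 = 1 := by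
      simpa [Complex.norm_conj] using hab
    have hσd : IsDensity (Uab a b * ρ * (Uab a b)ᴴ) := by
      refine ⟨hρ.1.mul_mul_conjTranspose_same _, ?_⟩
      rw [Matrix.trace_mul_cycle, hU'U, Matrix.one_mul, hρ.2]
    have hup := qubit_upper ((starRingEnd ℂ) a) (-b) hab' (Uab a b * ρ * (Uab a b)ᴴ) hσd
    rw [← Uab_conjTranspose] at hup
    have hback : (Uab a b)ᴴ * (Uab a b * ρ * (Uab a b)ᴴ) * ((Uab a b)ᴴ)ᴴ = ρ := by
      rw [Matrix.conjTranspose_conjTranspose]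
      calc (Uab a b)ᴴ * (Uab a b * ρ * (Uab a b)ᴴ) * Uab a b
          = ((Uab a b)ᴴ * Uab a b) * ρ * ((Uab a b)ᴴ * Uab a b) := by
            simp only [Matrix.mul_assoc]
        _ = ρ := by rw [hU'U, Matrix.one_mul, Matrix.mul_one]
    rw [hback] at hup
    calc Cl1 (Uab a b * ρ * (Uab a b)ᴴ) - Cl1 ρ
        ≤ 2 * ‖(starRingEnd ℂ) a‖ * ‖-b‖ := hup
      _ = 2 * ‖a‖ * ‖b‖ := by
          rw [Complex.norm_conj, norm_neg]
  · rw [hcl, hcl1, max_self]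
  · have h1 : |‖a‖ ^ 2 - ‖b‖ ^ 2| ^ 2
        = (‖a‖ ^ 2 - ‖b‖ ^ 2)^2 := sq_abs _
    have h2 : 0 ≤ |‖a‖ ^ 2 - ‖b‖ ^ 2| := abs_nonneg _
    nlinarith [sq_nonneg (‖a‖ - ‖b‖), mul_nonneg hA0 hB0,
      sq_nonneg (2*‖a‖*‖b‖ - 1), hab, h1, h2,
      sq_nonneg (1 - |‖a‖ ^ 2 - ‖b‖ ^ 2|)]
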